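/- arXiv:2303.13738 — 8 statements merged into one kernel-verified Lean document; each statement's English description precedes it below -/
import Mathlib

section
/- Let T : X → X be a bounded linear nonexpansive operator with T ≠ Id. Then the modulus of averagedness of T equals sup over all z with z ≠ Tz of ‖z - Tz‖² / (2⟨z, z - Tz⟩). -/
open Set RealInnerProductSpace

variable {X : Type*} [NormedAddCommGroup X] [InnerProductSpace ℝ X] [CompleteSpace X]

def Nonexpansive (T : X → X) : Prop := ∀ x y, ‖T x - T y‖ ≤ ‖x - y‖

def IsAveraged (T : X → X) (κ : ℝ) : Prop :=
  ∃ N : X → X, Nonexpansive N ∧ ∀ x, T x = (1 - κ) • x + κ • N x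

lemma expand_aux (c : ℝ) (z u : X) :
    ‖z - c • u‖ ^ 2 = ‖z‖ ^ 2 - 2 * c * ⟪z, u⟫ + c ^ 2 * ‖u‖ ^ 2 := by
  rw [norm_sub_sq_real, real_inner_smul_right, norm_smul]
  simp [mul_pow, sq_abs]
  ring

lemma sq_ineq_of_norm_le {κ : ℝ} (hκ : 0 < κ) (z Tz : X)
    (h : ‖z - κ⁻¹ • (z - Tz)‖ ≤ ‖z‖) :
    ‖z - Tz‖ ^ 2 ≤ 2 * κ * ⟪z, z - Tz⟫ := by
  have h2 : ‖z - κ⁻¹ • (z - Tz)‖ ^ 2 ≤ ‖z‖ ^ 2 :=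
    pow_le_pow_left₀ (norm_nonneg _) h 2
  rw [expand_aux] at h2
  have h3 : κ⁻¹ ^ 2 * ‖z - Tz‖ ^ 2 ≤ 2 * κ⁻¹ * ⟪z, z - Tz⟫ := by linarith
  have e1 : κ ^ 2 * κ⁻¹ ^ 2 = 1 := by field_simp
  have e2 : κ ^ 2 * κ⁻¹ = κ := by field_simp
  calc ‖z - Tz‖ ^ 2 = κ ^ 2 * κ⁻¹ ^ 2 * ‖z - Tz‖ ^ 2 := by rw [e1, one_mul]
    _ = κ ^ 2 * (κ⁻¹ ^ 2 * ‖z - Tz‖ ^ 2) := by ring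
    _ ≤ κ ^ 2 * (2 * κ⁻¹ * ⟪z, z - Tz⟫) := mul_le_mul_of_nonneg_left h3 (sq_nonneg κ)
    _ = 2 * (κ ^ 2 * κ⁻¹) * ⟪z, z - Tz⟫ := by ring
    _ = 2 * κ * ⟪z, z - Tz⟫ := by rw [e2]

lemma norm_le_of_sq_ineq {κ : ℝ} (hκ : 0 < κ) (z Tz : X)
    (h : ‖z - Tz‖ ^ 2 ≤ 2 * κ * ⟪z, z - Tz⟫) :
    ‖z - κ⁻¹ • (z - Tz)‖ ≤ ‖z‖ := by
  have hc : κ * κ⁻¹ = 1 := mul_inv_cancel₀ (ne_of_gt hκ)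
  have h2 : ‖z - κ⁻¹ • (z - Tz)‖ ^ 2 ≤ ‖z‖ ^ 2 := by
    rw [expand_aux]
    have e3 : κ * κ⁻¹ ^ 2 = κ⁻¹ := by field_simp
    have h3 : κ⁻¹ ^ 2 * ‖z - Tz‖ ^ 2 ≤ 2 * κ⁻¹ * ⟪z, z - Tz⟫ := by
      calc κ⁻¹ ^ 2 * ‖z - Tz‖ ^ 2 ≤ κ⁻¹ ^ 2 * (2 * κ * ⟪z, z - Tz⟫) :=
            mul_le_mul_of_nonneg_left h (sq_nonneg _)
        _ = 2 * (κ * κ⁻¹ ^ 2) * ⟪z, z - Tz⟫ := by ring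
        _ = 2 * κ⁻¹ * ⟪z, z - Tz⟫ := by rw [e3]
    linarith
  calc ‖z - κ⁻¹ • (z - Tz)‖ = Real.sqrt (‖z - κ⁻¹ • (z - Tz)‖ ^ 2) := by
        rw [Real.sqrt_sq (norm_nonneg _)]
    _ ≤ Real.sqrt (‖z‖ ^ 2) := Real.sqrt_le_sqrt h2
    _ = ‖z‖ := Real.sqrt_sq (norm_nonneg _)

theorem modulus_eq_sup_quotient (T : X →L[ℝ] X) (hT : ‖T‖ ≤ 1)
    (hTne : T ≠ ContinuousLinearMap.id ℝ X) :
    IsLeast {κ : ℝ | κ ∈ Icc (0 : ℝ) 1 ∧ IsAveraged (⇑T) κ}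
      (sSup {r : ℝ | ∃ z : X, z ≠ T z ∧ r = ‖z - T z‖ ^ 2 / (2 * ⟪z, z - T z⟫)}) := by
  set S := {r : ℝ | ∃ z : X, z ≠ T z ∧ r = ‖z - T z‖ ^ 2 / (2 * ⟪z, z - T z⟫)} with hSdef
  -- basic inequality from nonexpansiveness of T
  have key : ∀ z : X, ‖z - T z‖ ^ 2 ≤ 2 * ⟪z, z - T z⟫ := by
    intro z
    have h1 : ‖T z‖ ≤ ‖z‖ := by
      calc ‖T z‖ ≤ ‖T‖ * ‖z‖ := T.le_opNorm z
        _ ≤ 1 * ‖z‖ := mul_le_mul_of_nonneg_right hT (norm_nonneg z)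
        _ = ‖z‖ := one_mul _
    have h2 : ‖T z‖ ^ 2 ≤ ‖z‖ ^ 2 := pow_le_pow_left₀ (norm_nonneg _) h1 2
    have h3 : ‖z - (z - T z)‖ ^ 2
        = ‖z‖ ^ 2 - 2 * ⟪z, z - T z⟫ + ‖z - T z‖ ^ 2 := norm_sub_sq_real z (z - T z)
    have h4 : z - (z - T z) = T z := by abel
    rw [h4] at h3
    nlinarith
  have pos : ∀ z : X, z ≠ T z → 0 < ⟪z, z - T z⟫ := by
    intro z hz
    have h0 : 0 < ‖z - T z‖ ^ 2 :=
      pow_pos (norm_pos_iff.mpr (sub_ne_zero_of_ne hz)) 2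
    nlinarith [key z]
  -- S is nonempty
  obtain ⟨z₀, hz₀⟩ : ∃ z : X, z ≠ T z := by
    by_contra h
    push_neg at h
    exact hTne (ContinuousLinearMap.ext fun x => (h x).symm)
  have hz₀S : ‖z₀ - T z₀‖ ^ 2 / (2 * ⟪z₀, z₀ - T z₀⟫) ∈ S := ⟨z₀, hz₀, rfl⟩
  have hSne : S.Nonempty := ⟨_, hz₀S⟩
  -- elements of S are in (0, 1]
  have hmem : ∀ r ∈ S, 0 < r ∧ r ≤ 1 := by
    rintro r ⟨z, hz, rfl⟩
    have hd := pos z hz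
    have hn : 0 < ‖z - T z‖ ^ 2 :=
      pow_pos (norm_pos_iff.mpr (sub_ne_zero_of_ne hz)) 2
    constructor
    · positivity
    · rw [div_le_one (by positivity)]
      simpa using key z
  have hbdd : BddAbove S := ⟨1, fun r hr => (hmem r hr).2⟩
  set κ := sSup S with hκdef
  have hκ_ge : ∀ r ∈ S, r ≤ κ := fun r hr => le_csSup hbdd hr
  have hκpos : 0 < κ := lt_of_lt_of_le (hmem _ hz₀S).1 (hκ_ge _ hz₀S)
  have hκ1 : κ ≤ 1 := csSup_le hSne fun r hr => (hmem r hr).2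
  -- main pointwise inequality for κ
  have key2 : ∀ z : X, ‖z - T z‖ ^ 2 ≤ 2 * κ * ⟪z, z - T z⟫ := by
    intro z
    by_cases hz : z = T z
    · rw [show z - T z = 0 by rw [← hz]; abel]
      simp
    · have hd := pos z hz
      have hr : ‖z - T z‖ ^ 2 / (2 * ⟪z, z - T z⟫) ≤ κ := hκ_ge _ ⟨z, hz, rfl⟩
      rw [div_le_iff₀ (by positivity)] at hr
      nlinarith
  constructor
  · refine ⟨⟨le_of_lt hκpos, hκ1⟩, fun x => x + κ⁻¹ • (T x - x), ?_, ?_⟩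
    · intro x y
      have heq : (x + κ⁻¹ • (T x - x)) - (y + κ⁻¹ • (T y - y))
          = (x - y) - κ⁻¹ • ((x - y) - T (x - y)) := by
        rw [map_sub]
        module
      rw [heq]
      exact norm_le_of_sq_ineq hκpos _ _ (key2 (x - y))
    · intro x
      rw [smul_add, smul_inv_smul₀ (ne_of_gt hκpos), sub_smul, one_smul]
      abel
  · rintro κ' ⟨⟨hκ'0, hκ'1⟩, N, hN, hNx⟩
    have hκ'ne : κ' ≠ 0 := by
      rintro rfl
      apply hTne
      ext x
      have := hNx x
      simpa using this
    have hκ'pos : 0 < κ' := lt_of_le_of_ne hκ'0 (Ne.symm hκ'ne)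
    -- N 0 = 0
    have hN0 : N 0 = 0 := by
      have h := hNx 0
      rw [map_zero] at h
      simp only [smul_zero, zero_add] at h
      rcases smul_eq_zero.mp h.symm with h' | h'
      · exact absurd h' hκ'ne
      · exact h'
    -- formula for N z
    have hNz : ∀ z : X, N z = z - κ'⁻¹ • (z - T z) := by
      intro z
      have h1 : κ' • N z = T z - (1 - κ') • z := by
        rw [hNx z]; abel
      have h2 : N z = κ'⁻¹ • (T z - (1 - κ') • z) := by
        rw [← h1, smul_smul, inv_mul_cancel₀ hκ'ne, one_smul]
      rw [h2, smul_sub, sub_smul, one_smul, smul_sub, smul_sub, smul_smul,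
        inv_mul_cancel₀ hκ'ne, one_smul]
      abel
    have hineq : ∀ z : X, ‖z - T z‖ ^ 2 ≤ 2 * κ' * ⟪z, z - T z⟫ := by
      intro z
      have h := hN z 0
      rw [hN0, sub_zero, sub_zero, hNz z] at h
      exact sq_ineq_of_norm_le hκ'pos z (T z) h
    refine csSup_le hSne ?_
    rintro r ⟨z, hz, rfl⟩
    have hd := pos z hz
    rw [div_le_iff₀ (by positivity)]
    nlinarith [hineq z]
end

section
/- Let R : X → X be a bounded linear nonexpansive operator on a real Hilbert space. Then the closure of the range of Id - R equals the orthogonal complement of the fixed point set of R, i.e., closure(ran(Id - R)) = (Fix R)^⊥. -/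
local notation "⟪" x ", " y "⟫" => @inner ℝ _ _ x y

theorem closure_range_id_sub_eq_orthogonal_fix
    {X : Type*} [NormedAddCommGroup X] [InnerProductSpace ℝ X] [CompleteSpace X]
    (R : X →L[ℝ] X) (hR : ‖R‖ ≤ 1) :
    (LinearMap.range ((ContinuousLinearMap.id ℝ X - R : X →L[ℝ] X) : X →ₗ[ℝ] X)).topologicalClosure
      = (LinearMap.ker ((ContinuousLinearMap.id ℝ X - R : X →L[ℝ] X) : X →ₗ[ℝ] X))ᗮ := by
  rw [← Submodule.orthogonal_orthogonal_eq_closure]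
  congr 1
  apply le_antisymm
  · -- (range T)ᗮ ≤ ker T
    intro x hx
    have hinner : ∀ y, ⟪R y, x⟫ = ⟪y, x⟫ := by
      intro y
      have := hx _ (LinearMap.mem_range_self ((ContinuousLinearMap.id ℝ X - R : X →L[ℝ] X) : X →ₗ[ℝ] X) y)
      simp only [ContinuousLinearMap.coe_coe, ContinuousLinearMap.coe_sub', Pi.sub_apply,
        ContinuousLinearMap.coe_id', id_eq, inner_sub_left, sub_eq_zero] at this
      linarith [this]
    have hfix : R x = x := by
      refine eq_of_norm_le_re_inner_eq_norm_sq (𝕜 := ℝ) (by simpa using R.le_of_opNorm_le hR x) ?_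
      simp [hinner, real_inner_self_eq_norm_sq]
    simp [LinearMap.mem_ker, ContinuousLinearMap.coe_sub', hfix, sub_eq_zero]
  · -- ker T ≤ (range T)ᗮ
    intro x hx
    have hfix : R x = x := by
      have := hx
      simp only [LinearMap.mem_ker, ContinuousLinearMap.coe_coe, ContinuousLinearMap.coe_sub',
        ContinuousLinearMap.coe_id', Pi.sub_apply, id_eq, sub_eq_zero] at this
      exact this.symm
    have hadj : (ContinuousLinearMap.adjoint R) x = x := by
      refine eq_of_norm_le_re_inner_eq_norm_sq (𝕜 := ℝ) ?_ ?_
      · calc ‖(ContinuousLinearMap.adjoint R) x‖ ≤ ‖ContinuousLinearMap.adjoint R‖ * ‖x‖ :=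
              (ContinuousLinearMap.adjoint R).le_opNorm x
          _ ≤ 1 * ‖x‖ := by
              gcongr
              calc ‖ContinuousLinearMap.adjoint R‖ = ‖R‖ :=
                    LinearIsometryEquiv.norm_map ContinuousLinearMap.adjoint R
                _ ≤ 1 := hR
          _ = ‖x‖ := one_mul _
      · have : ⟪(ContinuousLinearMap.adjoint R) x, x⟫ = ⟪x, R x⟫ :=
          ContinuousLinearMap.adjoint_inner_left R x x
        simp [this, hfix, real_inner_self_eq_norm_sq]
    intro y hy
    obtain ⟨z, rfl⟩ := hy
    simp only [ContinuousLinearMap.coe_coe, ContinuousLinearMap.coe_sub', ContinuousLinearMap.coe_id', Pi.sub_apply, id_eq,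
      inner_sub_left]
    rw [sub_eq_zero]
    calc ⟪z, x⟫ = ⟪z, (ContinuousLinearMap.adjoint R) x⟫ := by rw [hadj]
      _ = ⟪R z, x⟫ := (ContinuousLinearMap.adjoint_inner_right R z x)
end

section
/- Let R : X → X be a bounded linear nonexpansive operator on a real Hilbert space. Then ker(Id - R) = ker(Id - R*), i.e., R and its adjoint R* have the same fixed point set. -/
lemma ker_le_ker_adjoint_aux
    {X : Type*} [NormedAddCommGroup X] [InnerProductSpace ℝ X] [CompleteSpace X]
    (S : X →L[ℝ] X) (hS : ‖S‖ ≤ 1) :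
    LinearMap.ker ((ContinuousLinearMap.id ℝ X - S : X →L[ℝ] X) : X →ₗ[ℝ] X)
      ≤ LinearMap.ker ((ContinuousLinearMap.id ℝ X - ContinuousLinearMap.adjoint S : X →L[ℝ] X) : X →ₗ[ℝ] X) := by
  intro x hx
  have hx' : S x = x := by
    have h := hx
    simp only [LinearMap.mem_ker, ContinuousLinearMap.coe_coe, ContinuousLinearMap.sub_apply,
      ContinuousLinearMap.id_apply, sub_eq_zero] at h
    exact h.symm
  have hA : ‖ContinuousLinearMap.adjoint S‖ = ‖S‖ := LinearIsometryEquiv.norm_map _ S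
  have hnorm : ‖ContinuousLinearMap.adjoint S x‖ ≤ ‖x‖ := by
    calc ‖ContinuousLinearMap.adjoint S x‖ ≤ ‖ContinuousLinearMap.adjoint S‖ * ‖x‖ :=
          (ContinuousLinearMap.adjoint S).le_opNorm x
      _ ≤ 1 * ‖x‖ := by
          apply mul_le_mul_of_nonneg_right _ (norm_nonneg x)
          rw [hA]; exact hS
      _ = ‖x‖ := one_mul _
  have hinner : inner ℝ (ContinuousLinearMap.adjoint S x) x = (‖x‖ : ℝ) ^ 2 := by
    rw [ContinuousLinearMap.adjoint_inner_left, hx', real_inner_self_eq_norm_sq]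
  have hkey : ‖ContinuousLinearMap.adjoint S x - x‖ ^ 2 ≤ 0 := by
    rw [norm_sub_sq_real, hinner]
    nlinarith [sq_nonneg ‖ContinuousLinearMap.adjoint S x‖,
      norm_nonneg (ContinuousLinearMap.adjoint S x), norm_nonneg x]
  have hz : ContinuousLinearMap.adjoint S x - x = 0 := by
    have := le_antisymm hkey (sq_nonneg _)
    simpa [pow_eq_zero_iff, norm_eq_zero] using this
  have h2 : ContinuousLinearMap.adjoint S x = x := sub_eq_zero.mp hz
  simp [LinearMap.mem_ker, h2]

theorem ker_id_sub_eq_ker_id_sub_adjoint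
    {X : Type*} [NormedAddCommGroup X] [InnerProductSpace ℝ X] [CompleteSpace X]
    (R : X →L[ℝ] X) (hR : ‖R‖ ≤ 1) :
    LinearMap.ker ((ContinuousLinearMap.id ℝ X - R : X →L[ℝ] X) : X →ₗ[ℝ] X)
      = LinearMap.ker ((ContinuousLinearMap.id ℝ X - ContinuousLinearMap.adjoint R : X →L[ℝ] X) : X →ₗ[ℝ] X) := by
  refine le_antisymm (ker_le_ker_adjoint_aux R hR) ?_
  have h := ker_le_ker_adjoint_aux (ContinuousLinearMap.adjoint R)
    (by rw [LinearIsometryEquiv.norm_map]; exact hR)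
  rwa [ContinuousLinearMap.adjoint_adjoint] at h
end

section
/- Let V be a closed linear subspace of a real Hilbert space X with V ≠ X, let R_V := P_V - P_{V⊥} be the reflector across V, and let β ∈ [0,1]. Then the modulus of averagedness of (1-β)Id + βR_V equals β. -/
open Set
variable {X : Type*} [NormedAddCommGroup X] [InnerProductSpace ℝ X] [CompleteSpace X]

theorem modulus_relaxed_reflector (V : Submodule ℝ X) [CompleteSpace V]
    (hV : V ≠ ⊤) (β : ℝ) (hβ : β ∈ Icc (0 : ℝ) 1) :
    IsLeast {κ : ℝ | κ ∈ Icc (0 : ℝ) 1 ∧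
        IsAveraged (fun x : X =>
          (1 - β) • x + β • ((2 : ℝ) • (V.orthogonalProjection x : X) - x)) κ} β := by
  obtain ⟨hβ0, hβ1⟩ := hβ
  have hne : Vᗮ ≠ ⊥ := by
    simpa [Submodule.orthogonal_eq_bot_iff] using hV
  obtain ⟨v, hvmem, hv0⟩ := Submodule.exists_mem_ne_zero_of_ne_bot hne
  have hPv : ((V.orthogonalProjection v : V) : X) = 0 := by
    exact congrArg Subtype.val (Submodule.orthogonalProjectionOnto_apply_of_mem_orthogonal hvmem)
  constructor
  · refine ⟨⟨hβ0, hβ1⟩, V.reflection, ?_, ?_⟩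
    · intro x y
      rw [← LinearIsometryEquiv.map_sub]
      exact ((V.reflection).norm_map _).le
    · intro x
      rw [Submodule.reflection_apply, two_smul]
      simp [two_smul]
  · rintro κ ⟨⟨hκ0, hκ1⟩, N, hN, hNeq⟩
    rcases eq_or_lt_of_le hβ0 with h0 | hβpos
    · linarith
    rcases eq_or_lt_of_le hκ0 with h0 | hκpos
    · exfalso
      have h := hNeq v
      simp only [hPv, smul_zero, zero_sub, smul_neg, ← h0, sub_zero, one_smul,
        zero_smul, add_zero] at h
      have h2 : ((-2) * β) • v = 0 := by
        have : (1 - β) • v + -(β • v) - v = 0 := by rw [h]; abel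
        rw [← this]; module
      rcases smul_eq_zero.mp h2 with h3 | h3
      · have : β = 0 := by linarith [(by linarith : (-2:ℝ) * β = 0)]
        linarith
      · exact hv0 h3
    -- κ > 0 case
    have hN0 : N 0 = 0 := by
      have h := hNeq 0
      simp only [smul_zero, sub_zero, zero_sub, smul_neg, neg_zero, add_zero,
        map_zero, Submodule.coe_zero, zero_add] at h
      rcases smul_eq_zero.mp h.symm with h3 | h3
      · linarith
      · exact h3
    have hTv : κ • N v = (κ - 2 * β) • v := by
      have h := hNeq v
      simp only [hPv, smul_zero, zero_sub, smul_neg] at h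
      have : κ • N v = ((1 - β) • v + -(β • v)) - (1 - κ) • v := by
        rw [h]; abel
      rw [this]; module
    have hle : ‖N v‖ ≤ ‖v‖ := by
      have := hN v 0
      simpa [hN0] using this
    have hmul : |κ - 2*β| * ‖v‖ ≤ κ * ‖v‖ := by
      have h1 : ‖κ • N v‖ = |κ - 2*β| * ‖v‖ := by
        rw [hTv, norm_smul, Real.norm_eq_abs]
      have h2 : ‖κ • N v‖ ≤ κ * ‖v‖ := by
        rw [norm_smul, Real.norm_eq_abs, abs_of_pos hκpos]
        exact mul_le_mul_of_nonneg_left hle hκpos.le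
      linarith [h1 ▸ h2]
    have hv' : 0 < ‖v‖ := norm_pos_iff.mpr hv0
    have h2 : |κ - 2*β| ≤ κ := le_of_mul_le_mul_right hmul hv'
    have := abs_le.mp h2
    linarith [this.1]
end

section
/- Let T : X → X be a bounded linear nonexpansive operator on a real Hilbert space. Then T and its adjoint T* have the same modulus of averagedness: κ(T) = κ(T*). -/
open Set

variable {X : Type*} [NormedAddCommGroup X] [InnerProductSpace ℝ X] [CompleteSpace X]

lemma averaged_iff_norm (T : X →L[ℝ] X) {κ : ℝ} (hκ0 : (0:ℝ) ≤ κ) :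
    IsAveraged (⇑T) κ ↔ ‖T - (1 - κ) • ContinuousLinearMap.id ℝ X‖ ≤ κ := by
  constructor
  · rintro ⟨N, hN, hTN⟩
    apply ContinuousLinearMap.opNorm_le_bound _ hκ0
    intro x
    have h1 : (T - (1 - κ) • ContinuousLinearMap.id ℝ X) x = κ • N x - κ • N 0 := by
      have h0 := hTN 0
      have hx := hTN x
      simp only [map_zero, smul_zero, zero_add] at h0
      rw [ContinuousLinearMap.sub_apply, ContinuousLinearMap.smul_apply,
        ContinuousLinearMap.id_apply, hx, ← h0]
      abel
    rw [h1, ← smul_sub, norm_smul, Real.norm_of_nonneg hκ0]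
    have := hN x 0
    rw [sub_zero] at this
    exact mul_le_mul_of_nonneg_left this hκ0
  · intro h
    rcases eq_or_lt_of_le hκ0 with hz | hpos
    · subst hz
      have hT0 : T - (1 - (0:ℝ)) • ContinuousLinearMap.id ℝ X = 0 := norm_le_zero_iff.mp h
      have hid : ∀ z : X, T z = z := by
        intro z
        have := ContinuousLinearMap.ext_iff.mp hT0 z
        simpa [sub_eq_zero] using this
      exact ⟨id, fun x y => le_refl _, fun x => by simp [hid x]⟩
    · set S := T - (1 - κ) • ContinuousLinearMap.id ℝ X with hS
      refine ⟨fun x => κ⁻¹ • S x, ?_, ?_⟩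
      · intro x y
        rw [← smul_sub, ← map_sub, norm_smul, Real.norm_of_nonneg (inv_nonneg.2 hκ0)]
        calc κ⁻¹ * ‖S (x - y)‖ ≤ κ⁻¹ * (κ * ‖x - y‖) := by
              exact mul_le_mul_of_nonneg_left (S.le_of_opNorm_le h _) (inv_nonneg.2 hκ0)
          _ = ‖x - y‖ := by rw [← mul_assoc, inv_mul_cancel₀ (ne_of_gt hpos), one_mul]
      · intro x
        rw [smul_smul, mul_inv_cancel₀ (ne_of_gt hpos), one_smul]
        simp only [hS, ContinuousLinearMap.sub_apply, ContinuousLinearMap.smul_apply,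
          ContinuousLinearMap.id_apply]
        abel

lemma adjoint_norm_eq (T : X →L[ℝ] X) (κ : ℝ) :
    ‖ContinuousLinearMap.adjoint T - (1 - κ) • ContinuousLinearMap.id ℝ X‖
      = ‖T - (1 - κ) • ContinuousLinearMap.id ℝ X‖ := by
  have : ContinuousLinearMap.adjoint T - (1 - κ) • ContinuousLinearMap.id ℝ X
      = ContinuousLinearMap.adjoint (T - (1 - κ) • ContinuousLinearMap.id ℝ X) := by
    rw [map_sub, map_smul, ContinuousLinearMap.adjoint_id]
  rw [this]
  exact LinearIsometryEquiv.norm_map ContinuousLinearMap.adjoint _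

theorem modulus_adjoint (T : X →L[ℝ] X) (hT : ‖T‖ ≤ 1) :
    sInf {κ : ℝ | κ ∈ Icc (0 : ℝ) 1 ∧ IsAveraged (⇑T) κ}
      = sInf {κ : ℝ | κ ∈ Icc (0 : ℝ) 1 ∧ IsAveraged (⇑(ContinuousLinearMap.adjoint T)) κ} := by
  congr 1
  ext κ
  simp only [mem_setOf_eq, mem_Icc]
  constructor
  · rintro ⟨hκ, hav⟩
    exact ⟨hκ, (averaged_iff_norm _ hκ.1).2 (by rw [adjoint_norm_eq]; exact (averaged_iff_norm _ hκ.1).1 hav)⟩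
  · rintro ⟨hκ, hav⟩
    exact ⟨hκ, (averaged_iff_norm _ hκ.1).2 (by rw [← adjoint_norm_eq]; exact (averaged_iff_norm _ hκ.1).1 hav)⟩
end

section
/- Let T : X → X be a bounded linear nonexpansive operator and κ ∈ (0,1]. Then T is κ-averaged if and only if the operator (2κ - 1)Id - (T*T - (1-κ)(T + T*)) is positive semidefinite. -/
open Set RealInnerProductSpace

variable {X : Type*} [NormedAddCommGroup X] [InnerProductSpace ℝ X] [CompleteSpace X]

lemma key_identity (T : X →L[ℝ] X) (κ : ℝ) (x : X) :
    ⟪x, (2 * κ - 1) • x -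
        (ContinuousLinearMap.adjoint T (T x)
          - (1 - κ) • (T x + ContinuousLinearMap.adjoint T x))⟫
      = κ ^ 2 * ‖x‖ ^ 2 - ‖T x - (1 - κ) • x‖ ^ 2 := by
  have hadj : ⟪x, ContinuousLinearMap.adjoint T (T x)⟫ = ‖T x‖ ^ 2 := by
    rw [ContinuousLinearMap.adjoint_inner_right, real_inner_self_eq_norm_sq]
  have hadj2 : ⟪x, ContinuousLinearMap.adjoint T x⟫ = ⟪T x, x⟫ := by
    rw [ContinuousLinearMap.adjoint_inner_right]
  simp only [inner_sub_right, inner_smul_right, inner_add_right, hadj, hadj2,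
    real_inner_self_eq_norm_sq]
  rw [@norm_sub_sq_real, norm_smul, real_inner_smul_right, real_inner_comm x (T x)]
  simp only [Real.norm_eq_abs, mul_pow, sq_abs]
  ring

theorem averaged_iff_posSemidef (T : X →L[ℝ] X) (hT : ‖T‖ ≤ 1) (κ : ℝ)
    (hκ : κ ∈ Ioc (0 : ℝ) 1) :
    IsAveraged (⇑T) κ ↔
      ∀ x : X, 0 ≤ ⟪x, (2 * κ - 1) • x -
        (ContinuousLinearMap.adjoint T (T x)
          - (1 - κ) • (T x + ContinuousLinearMap.adjoint T x))⟫ := by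
  obtain ⟨hκ0, hκ1⟩ := hκ
  have hnorm : IsAveraged (⇑T) κ ↔ ∀ x : X, ‖T x - (1 - κ) • x‖ ≤ κ * ‖x‖ := by
    constructor
    · rintro ⟨N, hN, hTN⟩ x
      have h0 : κ • N 0 = 0 := by simpa using (hTN 0).symm
      have hN0 : N 0 = 0 := (smul_eq_zero.mp h0).resolve_left (ne_of_gt hκ0)
      have : T x - (1 - κ) • x = κ • N x := by rw [hTN x]; abel
      rw [this, norm_smul, Real.norm_eq_abs, abs_of_pos hκ0]
      have := hN x 0
      rw [hN0, sub_zero, sub_zero] at this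
      exact mul_le_mul_of_nonneg_left this (le_of_lt hκ0)
    · intro h
      refine ⟨fun x => κ⁻¹ • (T x - (1 - κ) • x), ?_, ?_⟩
      · intro x y
        have hlin : κ⁻¹ • (T x - (1 - κ) • x) - κ⁻¹ • (T y - (1 - κ) • y)
            = κ⁻¹ • (T (x - y) - (1 - κ) • (x - y)) := by
          rw [map_sub]; module
        rw [hlin, norm_smul, Real.norm_eq_abs, abs_of_pos (inv_pos.mpr hκ0)]
        calc κ⁻¹ * ‖T (x - y) - (1 - κ) • (x - y)‖ ≤ κ⁻¹ * (κ * ‖x - y‖) :=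
              mul_le_mul_of_nonneg_left (h (x - y)) (le_of_lt (inv_pos.mpr hκ0))
          _ = ‖x - y‖ := by field_simp
      · intro x
        rw [smul_smul, mul_inv_cancel₀ (ne_of_gt hκ0), one_smul]
        abel
  rw [hnorm]
  apply forall_congr'
  intro x
  rw [key_identity, sub_nonneg]
  constructor
  · intro h
    nlinarith [norm_nonneg (T x - (1 - κ) • x), norm_nonneg x, mul_nonneg hκ0.le (norm_nonneg x)]
  · intro h
    nlinarith [norm_nonneg (T x - (1 - κ) • x), norm_nonneg x, mul_nonneg hκ0.le (norm_nonneg x),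
      sq_nonneg (‖T x - (1 - κ) • x‖ + κ * ‖x‖)]
end

section
/- Let U, V be closed linear subspaces of a real Hilbert space X with U a proper subspace and U ⊆ V, and let β ∈ (0,1). Then ((1-β)Id + βR_V)P_U = P_U, and the modulus of averagedness of this operator equals 1/2. -/
open Set RealInnerProductSpace

variable {X : Type*} [NormedAddCommGroup X] [InnerProductSpace ℝ X] [CompleteSpace X]

lemma reflect_norm (U : Submodule ℝ X) [CompleteSpace U] (z : X) :
    ‖(2 : ℝ) • (Submodule.orthogonalProjectionOnto U z : X) - z‖ = ‖z‖ := by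
  have h : ⟪z - (Submodule.orthogonalProjectionOnto U z : X), (Submodule.orthogonalProjectionOnto U z : X)⟫ = 0 :=
    Submodule.starProjection_inner_eq_zero z _ (Submodule.orthogonalProjectionOnto U z).2
  have hz : ⟪z, (Submodule.orthogonalProjectionOnto U z : X)⟫ = ‖(Submodule.orthogonalProjectionOnto U z : X)‖ ^ 2 := by
    have := h
    rw [inner_sub_left, sub_eq_zero] at this
    rw [this, real_inner_self_eq_norm_sq]
  have key : ‖(2 : ℝ) • (Submodule.orthogonalProjectionOnto U z : X) - z‖ ^ 2 = ‖z‖ ^ 2 := by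
    rw [norm_sub_sq_real, norm_smul, real_inner_smul_left, real_inner_comm, hz]
    simp [Real.norm_eq_abs]
    ring
  nlinarith [norm_nonneg ((2 : ℝ) • (Submodule.orthogonalProjectionOnto U z : X) - z), norm_nonneg z]

theorem modulus_nested_subspaces (U V : Submodule ℝ X)
    [CompleteSpace U] [CompleteSpace V]
    (hU : U ≠ ⊤) (hUV : U ≤ V) (β : ℝ) (hβ : β ∈ Ioo (0 : ℝ) 1)
    (T : X → X)
    (hT : T = fun x : X => (1 - β) • (Submodule.orthogonalProjectionOnto U x : X) +
        β • ((2 : ℝ) • (Submodule.orthogonalProjectionOnto V (Submodule.orthogonalProjectionOnto U x : X) : X)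
          - (Submodule.orthogonalProjectionOnto U x : X))) :
    (∀ x : X, T x = (Submodule.orthogonalProjectionOnto U x : X)) ∧
      IsLeast {κ : ℝ | κ ∈ Icc (0 : ℝ) 1 ∧ IsAveraged T κ} (1 / 2) := by
  have hTP : ∀ x : X, T x = (Submodule.orthogonalProjectionOnto U x : X) := by
    intro x
    have hmem : ((Submodule.orthogonalProjectionOnto U x : X)) ∈ V := hUV (Submodule.orthogonalProjectionOnto U x).2
    have hV : ((Submodule.orthogonalProjectionOnto V (Submodule.orthogonalProjectionOnto U x : X) : X)) =
        (Submodule.orthogonalProjectionOnto U x : X) := (Submodule.starProjection_eq_self_iff).2 hmem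
    rw [hT]
    simp only [hV]
    set p := (Submodule.orthogonalProjectionOnto U x : X)
    module
  refine ⟨hTP, ?_, ?_⟩
  · -- 1/2 is in the set
    refine ⟨⟨by norm_num, by norm_num⟩,
      ⟨fun x => (2 : ℝ) • (Submodule.orthogonalProjectionOnto U x : X) - x, ?_, ?_⟩⟩
    · intro x y
      have hlin : ((2 : ℝ) • (Submodule.orthogonalProjectionOnto U x : X) - x) -
          ((2 : ℝ) • (Submodule.orthogonalProjectionOnto U y : X) - y) =
          (2 : ℝ) • (Submodule.orthogonalProjectionOnto U (x - y) : X) - (x - y) := by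
        rw [map_sub]
        push_cast
        module
      rw [hlin, reflect_norm]
    · intro x
      rw [hTP x]
      set p := (Submodule.orthogonalProjectionOnto U x : X)
      module
  · -- lower bound
    rintro κ ⟨⟨hκ0, hκ1⟩, N, hN, hNκ⟩
    by_contra hlt
    push_neg at hlt
    -- get x₀ ∈ Uᗮ nonzero
    have hUorth : Uᗮ ≠ ⊥ := by
      intro h
      exact hU (Submodule.orthogonal_eq_bot_iff.mp h)
    obtain ⟨x₀, hx₀U, hx₀⟩ := Submodule.exists_mem_ne_zero_of_ne_bot hUorth
    have hPx₀ : (Submodule.orthogonalProjectionOnto U x₀ : X) = 0 := by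
      rw [Submodule.orthogonalProjectionOnto_apply_of_mem_orthogonal hx₀U]
      rfl
    have hκpos : 0 < κ := by
      rcases lt_or_eq_of_le hκ0 with h | h
      · exact h
      · exfalso
        have := hNκ x₀
        rw [hTP x₀, hPx₀, ← h] at this
        simp at this
        exact hx₀ this.symm
    have hN0 : N 0 = 0 := by
      have h := hNκ 0
      rw [hTP 0] at h
      simp only [map_zero, Submodule.coe_zero, smul_zero, zero_add] at h
      rcases smul_eq_zero.mp h.symm with h' | h'
      · exact absurd h' hκpos.ne'
      · exact h'
    have hNx₀ : N x₀ = -((1 - κ) / κ) • x₀ := by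
      have := hNκ x₀
      rw [hTP x₀, hPx₀] at this
      have h2 : κ • N x₀ = -((1 - κ) • x₀) := by linear_combination (norm := module) this.symm
      have h3 : N x₀ = κ⁻¹ • (-((1 - κ) • x₀)) := by
        rw [← h2, smul_smul, inv_mul_cancel₀ (ne_of_gt hκpos), one_smul]
      rw [h3]
      rw [div_eq_inv_mul]
      module
    have := hN x₀ 0
    rw [hN0, hNx₀, sub_zero, sub_zero, norm_smul] at this
    have hnorm : ‖x₀‖ > 0 := norm_pos_iff.mpr hx₀
    rw [Real.norm_eq_abs, abs_neg, abs_of_nonneg (div_nonneg (by linarith) hκpos.le)] at this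
    have hle : (1 - κ) / κ ≤ 1 := by
      by_contra h
      push_neg at h
      nlinarith
    rw [div_le_one hκpos] at hle
    linarith
end

section
/- Let U, V be closed linear subspaces of a real Hilbert space X. Then the closure of P_{V⊥}(U) equals (U⊥ ∩ V⊥)^⊥ ∩ V⊥, where P_{V⊥} is the orthogonal projection onto V⊥. -/
theorem closure_proj_image {X : Type*} [NormedAddCommGroup X] [InnerProductSpace ℝ X]
    [CompleteSpace X] (U V : Submodule ℝ X) [CompleteSpace U] [CompleteSpace V] :
    closure ((fun x : X => (Submodule.orthogonalProjectionOnto Vᗮ x : X)) '' (U : Set X))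
      = (((Uᗮ ⊓ Vᗮ)ᗮ ⊓ Vᗮ : Submodule ℝ X) : Set X) := by
  set P : X →L[ℝ] X := Vᗮ.subtypeL.comp (Submodule.orthogonalProjectionOnto Vᗮ) with hPdef
  have hP : ∀ x : X, P x = (Submodule.orthogonalProjectionOnto Vᗮ x : X) := fun x => rfl
  set W : Submodule ℝ X := U.map (P : X →ₗ[ℝ] X) with hWdef
  have himg : (fun x : X => (Submodule.orthogonalProjectionOnto Vᗮ x : X)) '' (U : Set X) = (W : Set X) := rfl
  rw [himg, ← W.topologicalClosure_coe, ← Submodule.orthogonal_orthogonal_eq_closure]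
  have hadj : ∀ a b : X, (inner ℝ (P a) b : ℝ) = inner ℝ a (P b) := fun a b =>
    Submodule.inner_starProjection_left_eq_right Vᗮ a b
  have hW : Wᗮ = (Uᗮ ⊓ Vᗮ) ⊔ V := by
    ext x
    constructor
    · intro hx
      have hPx : P x ∈ Uᗮ ⊓ Vᗮ := by
        refine ⟨?_, (Submodule.orthogonalProjectionOnto Vᗮ x).2⟩
        intro u hu
        have h0 : (inner ℝ (P u) x : ℝ) = 0 := hx (P u) ⟨u, hu, rfl⟩
        rw [hadj] at h0
        exact h0
      have hxPx : x - P x ∈ V := by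
        have h1 : x - P x ∈ Vᗮᗮ := Submodule.sub_starProjection_mem_orthogonal (K := Vᗮ) x
        rwa [Submodule.orthogonal_orthogonal] at h1
      have hsum : x = P x + (x - P x) := by abel
      rw [hsum]
      exact Submodule.add_mem _ (Submodule.mem_sup_left hPx) (Submodule.mem_sup_right hxPx)
    · intro hx
      rw [Submodule.mem_sup] at hx
      obtain ⟨a, ha, v, hv, rfl⟩ := hx
      rintro w ⟨u, hu, rfl⟩
      have hPa : P a = a := by
        rw [hP]; exact Submodule.starProjection_eq_self_iff.2 ha.2
      have h1 : (inner ℝ (P u) a : ℝ) = 0 := by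
        rw [hadj, hPa]
        exact ha.1 u hu
      have h2 : (inner ℝ (P u) v : ℝ) = 0 := by
        rw [real_inner_comm]
        exact (Submodule.orthogonalProjectionOnto Vᗮ u).2 v hv
      simp [inner_add_right, h1, h2]
  rw [hW, ← Submodule.inf_orthogonal]
end
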